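/- Let P be a real polynomial of degree at most n with n ≥ 1, let a < b, and let M = max_{x ∈ [a,b]} |P(x)|. Then there exists a closed subinterval I ⊂ [a,b] of length at least (b−a)/(4n²) such that |P(x)| ≥ M/2 for all x ∈ I. -/

import Mathlib

open Set

open Polynomial


open Complex in
lemma expI_mul (x y : ℝ) :
    Complex.exp (x * I) * Complex.exp (y * I) = Complex.exp ((↑(x + y)) * I) := by
  rw [← Complex.exp_add]; push_cast; ring_nf

open Complex in
lemma expI_pow (x : ℝ) (k : ℕ) :
    Complex.exp (x * I) ^ k = Complex.exp ((↑(k * x)) * I) := by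
  rw [← Complex.exp_nat_mul]; push_cast; ring_nf

open Complex in
lemma expI_add_cos (θ : ℝ) :
    Complex.exp (θ * I) + Complex.exp ((↑(-θ)) * I) = 2 * (Real.cos θ : ℂ) := by
  rw [Complex.exp_mul_I, Complex.exp_mul_I]
  push_cast
  simp [Complex.cos_neg, Complex.sin_neg, Complex.ofReal_cos]
  ring

open Complex in
lemma conj_expI (x : ℝ) :
    (starRingEnd ℂ) (Complex.exp ((x:ℂ) * I)) = Complex.exp ((↑(-x)) * I) := by
  rw [← Complex.exp_conj]
  congr 1
  simp [Complex.conj_ofReal]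

open Complex in
lemma trig_eval (s θ₀ θ : ℝ) (n : ℕ) :
    Complex.exp ((↑(s - n*θ₀)) * I) * Complex.exp ((θ:ℂ)*I)^(2*n) +
      (starRingEnd ℂ) (Complex.exp ((↑(s - n*θ₀))*I)) =
    Complex.exp ((θ:ℂ)*I)^n * (2 * (Real.cos (n*(θ - θ₀) + s) : ℂ)) := by
  rw [expI_pow θ (2*n), expI_pow θ n, expI_mul, conj_expI,
    ← expI_add_cos (n*(θ-θ₀)+s), mul_add, expI_mul, expI_mul]
  congr 2 <;> push_cast <;> ring

lemma cos_nat_mul_pi (k : ℕ) : Real.cos (k * Real.pi) = (-1) ^ k := by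
  induction k with
  | zero => simp
  | succ i ih =>
    have : ((i + 1 : ℕ) : ℝ) * Real.pi = i * Real.pi + Real.pi := by push_cast; ring
    rw [this, Real.cos_add, Real.cos_pi, Real.sin_pi, ih]; ring

noncomputable def Bpoly (P : Polynomial ℝ) (n : ℕ) (m r : ℝ) : Polynomial ℂ :=
  ∑ k ∈ Finset.range (n + 1),
    C ((P.coeff k : ℝ) : ℂ) * X ^ (n - k) *
      (C (m : ℂ) * X + C ((r : ℂ) / 2) * (X ^ 2 + 1)) ^ k

lemma Bpoly_natDegree_le (P : Polynomial ℝ) (n : ℕ) (m r : ℝ) :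
    (Bpoly P n m r).natDegree ≤ 2 * n := by
  refine natDegree_sum_le_of_forall_le _ _ fun k hk => ?_
  have hk' : k ≤ n := Nat.lt_succ_iff.mp (Finset.mem_range.mp hk)
  have h1 : (C ((P.coeff k : ℝ) : ℂ) * X ^ (n - k)).natDegree ≤ n - k :=
    (natDegree_C_mul_le _ _).trans (natDegree_X_pow _).le
  have hH : (C (m : ℂ) * X + C ((r : ℂ) / 2) * (X ^ 2 + 1)).natDegree ≤ 2 := by
    refine (natDegree_add_le _ _).trans (max_le ?_ ?_)
    · exact (natDegree_C_mul_le _ _).trans (by simp)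
    · refine (natDegree_C_mul_le _ _).trans ((natDegree_add_le _ _).trans ?_)
      simp
  have h2 : ((C (m : ℂ) * X + C ((r : ℂ) / 2) * (X ^ 2 + 1)) ^ k).natDegree ≤ 2 * k :=
    natDegree_pow_le.trans (by nlinarith)
  calc (C ((P.coeff k : ℝ) : ℂ) * X ^ (n - k) *
      (C (m : ℂ) * X + C ((r : ℂ) / 2) * (X ^ 2 + 1)) ^ k).natDegree
      ≤ _ + _ := natDegree_mul_le
    _ ≤ (n - k) + 2 * k := add_le_add h1 h2
    _ ≤ 2 * n := by omega

open Complex in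
lemma Bpoly_eval {P : Polynomial ℝ} {n : ℕ} (hP : P.natDegree ≤ n) (m r θ : ℝ) :
    (Bpoly P n m r).eval (Complex.exp (θ * I)) =
      Complex.exp (θ * I) ^ n * ((P.eval (m + r * Real.cos θ) : ℝ) : ℂ) := by
  set z := Complex.exp ((θ : ℂ) * I) with hzdef
  have hz : z ^ 2 + 1 = z * (2 * (Real.cos θ : ℂ)) := by
    have h1 : z * z = Complex.exp ((↑(θ + θ)) * I) := expI_mul θ θ
    have h2 : z * Complex.exp ((↑(-θ)) * I) = 1 := by
      rw [expI_mul θ (-θ)]; simp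
    have h3 := expI_add_cos θ
    calc z ^ 2 + 1 = z * z + z * Complex.exp ((↑(-θ)) * I) := by rw [h2]; ring
      _ = z * (z + Complex.exp ((↑(-θ)) * I)) := by ring
      _ = z * (2 * (Real.cos θ : ℂ)) := by rw [h3]
  have key : ∀ k ∈ Finset.range (n + 1),
      eval z (C ((P.coeff k : ℝ) : ℂ) * X ^ (n - k) *
        (C (m : ℂ) * X + C ((r : ℂ) / 2) * (X ^ 2 + 1)) ^ k) =
      z ^ n * ((P.coeff k : ℂ) * ((m + r * Real.cos θ : ℝ) : ℂ) ^ k) := by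
    intro k hk
    have hk' : k ≤ n := Nat.lt_succ_iff.mp (Finset.mem_range.mp hk)
    have hHz : eval z (C (m : ℂ) * X + C ((r : ℂ) / 2) * (X ^ 2 + 1)) =
        z * ((m + r * Real.cos θ : ℝ) : ℂ) := by
      simp only [eval_add, eval_mul, eval_C, eval_X, eval_pow, eval_one]
      rw [hz]; push_cast; ring
    simp only [eval_mul, eval_C, eval_pow, eval_X, hHz]
    rw [mul_pow]
    have hzz : z ^ (n - k) * z ^ k = z ^ n := by
      rw [← pow_add]; congr 1; omega
    linear_combination (((P.coeff k : ℝ) : ℂ) * ((m + r * Real.cos θ : ℝ) : ℂ) ^ k) * hzz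
  rw [Bpoly, eval_finset_sum, Finset.sum_congr rfl key, ← Finset.mul_sum]
  congr 1
  have hev := Polynomial.eval_eq_sum_range' (lt_of_le_of_lt hP (Nat.lt_succ_self n))
    (m + r * Real.cos θ)
  rw [hev]
  push_cast
  rfl

section Core
variable {n : ℕ} {P : Polynomial ℝ} {m r M θ₀ θ₁ : ℝ}

set_option maxHeartbeats 2000000 in
open Complex in
lemma core (hn : 1 ≤ n) (hP : P.natDegree ≤ n) (hM : 0 < M)
    (hf : ∀ θ : ℝ, |P.eval (m + r * Real.cos θ)| ≤ M)
    (h0 : P.eval (m + r * Real.cos θ₀) = M)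
    (h01 : θ₀ ≤ θ₁) (h1 : θ₁ ≤ θ₀ + Real.pi / (3 * n)) :
    M / 2 ≤ P.eval (m + r * Real.cos θ₁) := by
  rcases eq_or_lt_of_le h01 with heq | hlt
  · rw [← heq, h0]; linarith
  by_contra hcon
  push_neg at hcon
  set f : ℝ → ℝ := fun θ => P.eval (m + r * Real.cos θ) with hfdef
  have hfθ : ∀ θ, f θ = P.eval (m + r * Real.cos θ) := fun θ => by rw [hfdef]
  clear_value f
  rw [← hfθ θ₁] at hcon
  rw [← hfθ θ₀] at h0
  have hπ : (3:ℝ) < Real.pi := Real.pi_gt_three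
  have hn0 : (0:ℝ) < n := by exact_mod_cast hn
  have hfM : ∀ θ : ℝ, -M ≤ f θ ∧ f θ ≤ M := by
    intro θ; rw [hfθ]; exact abs_le.mp (hf θ)
  -- parameters
  set ε : ℝ := 1/2 - f θ₁ / M with hε
  clear_value ε
  have hεpos : 0 < ε := by
    have h' : f θ₁ / M < 1/2 := by
      rw [div_lt_iff₀ hM]; linarith
    rw [hε]; linarith
  set s : ℝ := min (ε/2) (1/4) with hs
  clear_value s
  have hs0 : 0 < s := by rw [hs]; exact lt_min (by linarith) (by norm_num)
  have hs4 : s ≤ 1/4 := by rw [hs]; exact min_le_right _ _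
  have hsε : s < ε := by rw [hs]; exact lt_of_le_of_lt (min_le_left _ _) (by linarith)
  have hcs1 : Real.cos s < 1 := by
    have := Real.cos_lt_cos_of_nonneg_of_le_pi (le_refl 0) (by linarith : s ≤ Real.pi) hs0
    simpa using this
  have hcs0 : 0 < Real.cos s := Real.cos_pos_of_mem_Ioo ⟨by linarith, by linarith⟩
  set L : ℝ := (1 + Real.cos s) / (2 * Real.cos s) with hL
  clear_value L
  have hL1 : 1 < L := by
    rw [hL, lt_div_iff₀ (by linarith)]; linarith
  have hLcs : L * Real.cos s = (1 + Real.cos s) / 2 := by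
    rw [hL]; field_simp
  set G : ℝ → ℝ := fun θ => L * M * Real.cos (n * (θ - θ₀) + s) - f θ with hG
  have hGeq : ∀ θ, G θ = L * M * Real.cos (n * (θ - θ₀) + s) - f θ := fun θ => by rw [hG]
  have hGc : Continuous G := by
    rw [hG]
    have hfc : Continuous f := by
      have : f = fun θ => P.eval (m + r * Real.cos θ) := funext hfθ
      rw [this]; fun_prop
    fun_prop
  clear_value G
  -- the alternation points
  set p : ℕ → ℝ := fun j =>
    if j = 0 then θ₀ - s/n else if j = 1 then θ₀ else if j = 2 then θ₁
    else θ₀ - s/n + ((j:ℝ) - 2) * Real.pi / n with hp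
  clear_value p
  have hp0 : p 0 = θ₀ - s/n := by simp only [hp]; norm_num
  have hp1 : p 1 = θ₀ := by simp only [hp]; norm_num
  have hp2 : p 2 = θ₁ := by simp only [hp]; norm_num
  have hpj : ∀ j, 3 ≤ j → p j = θ₀ - s/n + ((j:ℝ) - 2) * Real.pi / n := by
    intro j hj
    simp only [hp]
    rw [if_neg (by omega), if_neg (by omega), if_neg (by omega)]
  have hLM : M < L * M := by nlinarith
  -- sign pattern: (-1)^j * G (p j) > 0
  have hsign : ∀ j, j ≤ 2*n+2 → 0 < (-1:ℝ)^j * G (p j) := by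
    intro j hj
    rcases Nat.lt_or_ge j 3 with hj3 | hj3
    · interval_cases j
      · -- j = 0
        rw [hGeq, hp0, pow_zero, one_mul]
        rw [show (n:ℝ) * ((θ₀ - s/n) - θ₀) + s = 0 by field_simp <;> ring, Real.cos_zero]
        have := (hfM (θ₀ - s/n)).2
        nlinarith
      · -- j = 1
        rw [hGeq, hp1, pow_one]
        rw [show (n:ℝ) * (θ₀ - θ₀) + s = s by ring]
        rw [h0]
        have e : L * M * Real.cos s = (1 + Real.cos s)/2 * M := by
          rw [show L * M * Real.cos s = (L * Real.cos s) * M by ring, hLcs]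
        rw [e]
        nlinarith
      · -- j = 2
        rw [hGeq, hp2]
        have hΔ1 : (n:ℝ) * (θ₁ - θ₀) + s ≤ Real.pi/3 + s := by
          have h' : (n:ℝ) * (θ₁ - θ₀) ≤ (n:ℝ) * (Real.pi / (3*n)) :=
            mul_le_mul_of_nonneg_left (by linarith) (le_of_lt hn0)
          have h'' : (n:ℝ) * (Real.pi / (3*n)) = Real.pi/3 := by field_simp <;> ring
          linarith [h'.trans_eq h'']
        have hΔ0 : 0 ≤ (n:ℝ) * (θ₁ - θ₀) + s := by nlinarith
        have hccc : Real.cos (Real.pi/3 + s) ≤ Real.cos ((n:ℝ) * (θ₁ - θ₀) + s) :=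
          Real.cos_le_cos_of_nonneg_of_le_pi hΔ0 (by linarith) hΔ1
        have hlip : Real.cos (Real.pi/3) - Real.cos (Real.pi/3 + s) ≤ s := by
          rw [Real.cos_sub_cos]
          have e1 : Real.sin ((Real.pi/3 + (Real.pi/3 + s))/2) ≤ 1 := Real.sin_le_one _
          have e2 : Real.sin ((Real.pi/3 - (Real.pi/3 + s))/2) = - Real.sin (s/2) := by
            rw [show (Real.pi/3 - (Real.pi/3 + s))/2 = -(s/2) by ring, Real.sin_neg]
          rw [e2]
          have e3 : Real.sin (s/2) ≤ s/2 := Real.sin_le (by linarith)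
          have e4 : 0 ≤ Real.sin (s/2) :=
            Real.sin_nonneg_of_nonneg_of_le_pi (by linarith) (by linarith)
          have e5 : 0 ≤ Real.sin ((Real.pi/3 + (Real.pi/3 + s))/2) :=
            Real.sin_nonneg_of_nonneg_of_le_pi (by linarith) (by linarith)
          nlinarith
        have hcos13 : Real.cos (Real.pi/3) = 1/2 := Real.cos_pi_div_three
        have hcge : (1:ℝ)/2 - s ≤ Real.cos ((n:ℝ) * (θ₁ - θ₀) + s) := by linarith
        have hfθ₁ : f θ₁ = M * (1/2 - ε) := by
          rw [hε]; field_simp; ring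
        have hcpos : (0:ℝ) < 1/2 - s := by linarith
        have c1 : 0 < Real.cos ((n:ℝ) * (θ₁ - θ₀) + s) := lt_of_lt_of_le hcpos hcge
        have c2 : M * (1/2 - s) ≤ M * Real.cos ((n:ℝ) * (θ₁ - θ₀) + s) :=
          mul_le_mul_of_nonneg_left hcge hM.le
        have c3 : M * Real.cos ((n:ℝ) * (θ₁ - θ₀) + s)
            ≤ L * M * Real.cos ((n:ℝ) * (θ₁ - θ₀) + s) := by
          rw [mul_assoc]
          exact le_mul_of_one_le_left (by positivity) hL1.le
        have c4 : f θ₁ < M * (1/2 - s) := by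
          rw [hfθ₁]
          have := mul_lt_mul_of_pos_left (show (1:ℝ)/2 - ε < 1/2 - s by linarith) hM
          linarith
        have : (-1:ℝ)^2 = 1 := by norm_num
        rw [this, one_mul]
        linarith
    · -- j ≥ 3
      have hcast : ((j - 2 : ℕ) : ℝ) = (j:ℝ) - 2 := by
        push_cast [Nat.cast_sub (by omega : 2 ≤ j)]; ring
      have harg : (n:ℝ) * (p j - θ₀) + s = ((j - 2 : ℕ) : ℝ) * Real.pi := by
        rw [hpj j hj3, hcast]; field_simp; ring
      have hjeq : (-1:ℝ)^j = (-1)^(j-2) := by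
        conv_lhs => rw [← Nat.sub_add_cancel (by omega : 2 ≤ j)]
        rw [pow_add]; norm_num
      have hfj := hfM (p j)
      rw [hGeq, harg, cos_nat_mul_pi, hjeq]
      rcases Nat.even_or_odd (j - 2) with he | ho
      · rw [he.neg_one_pow]; nlinarith [hfj.2]
      · rw [ho.neg_one_pow]; nlinarith [hfj.1]
  -- p is increasing
  have hstep : ∀ j, j + 1 ≤ 2*n+2 → p j < p (j+1) := by
    intro j hj
    have hπn : 0 < Real.pi / n := div_pos Real.pi_pos hn0
    rcases Nat.lt_or_ge j 3 with hj3 | hj3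
    · interval_cases j
      · rw [hp0, hp1]
        have : 0 < s / n := div_pos hs0 hn0
        linarith
      · rw [hp1, hp2]; exact hlt
      · rw [hp2, hpj 3 (by norm_num)]
        have e1 : ((3:ℕ):ℝ) - 2 = 1 := by norm_num
        rw [e1, one_mul]
        have hinv : 0 < 1/(n:ℝ) := by positivity
        have key : Real.pi/(3*(n:ℝ)) + s/n < Real.pi/n := by
          have e2 : Real.pi/(3*(n:ℝ)) = (Real.pi/3) * (1/n) := by ring
          have e3 : s/(n:ℝ) = s * (1/n) := by ring
          have e4 : Real.pi/(n:ℝ) = Real.pi * (1/n) := by ring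
          rw [e2, e3, e4]
          have : 0 < (Real.pi - Real.pi/3 - s) * (1/(n:ℝ)) := by
            apply mul_pos _ hinv; linarith
          nlinarith
        linarith
    · rw [hpj j hj3, hpj (j+1) (by omega)]
      have e : (((j:ℕ)+1:ℕ):ℝ) - 2 = ((j:ℝ) - 2) + 1 := by push_cast; ring
      rw [e, add_mul, one_mul, add_div]
      linarith
  have pmono : ∀ i k, i < k → k ≤ 2*n+2 → p i < p k := by
    have haux : ∀ d i, i + (d+1) ≤ 2*n+2 → p i < p (i + (d+1)) := by
      intro d
      induction d with
      | zero => intro i h; simpa using hstep i (by omega)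
      | succ e ih =>
        intro i h
        have h1 : p i < p (i + (e+1)) := ih i (by omega)
        have h2 : p (i + (e+1)) < p (i + (e+1) + 1) := hstep _ (by omega)
        have e2 : i + (e+1) + 1 = i + (e+1+1) := by omega
        rw [e2] at h2
        exact h1.trans h2
    intro i k hik hk
    have : k = i + ((k - i - 1) + 1) := by omega
    rw [this]
    exact haux _ _ (by omega)
  -- zeros between consecutive points
  have hzero : ∀ j, j < 2*n+2 → ∃ x, x ∈ Ioo (p j) (p (j+1)) ∧ G x = 0 := by
    intro j hj
    have hsj := hsign j (by omega)
    have hsj1 := hsign (j+1) (by omega)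
    have hplt : p j < p (j+1) := hstep j (by omega)
    rcases Nat.even_or_odd j with he | ho
    · rw [he.neg_one_pow, one_mul] at hsj
      have ho1 : Odd (j+1) := Even.add_one he
      rw [ho1.neg_one_pow] at hsj1
      have h2 : G (p (j+1)) < 0 := by linarith
      have := intermediate_value_Ioo' hplt.le hGc.continuousOn
        (show (0:ℝ) ∈ Ioo (G (p (j+1))) (G (p j)) from ⟨h2, hsj⟩)
      obtain ⟨x, hx, hx0⟩ := this
      exact ⟨x, hx, hx0⟩
    · rw [ho.neg_one_pow] at hsj
      have h1 : G (p j) < 0 := by linarith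
      have he1 : Even (j+1) := Odd.add_one ho
      rw [he1.neg_one_pow, one_mul] at hsj1
      have := intermediate_value_Ioo hplt.le hGc.continuousOn
        (show (0:ℝ) ∈ Ioo (G (p j)) (G (p (j+1))) from ⟨h1, hsj1⟩)
      obtain ⟨x, hx, hx0⟩ := this
      exact ⟨x, hx, hx0⟩
  -- choose the zeros
  have hζex : ∀ j : Fin (2*n+2), ∃ x, x ∈ Ioo (p (j:ℕ)) (p ((j:ℕ)+1)) ∧ G x = 0 :=
    fun j => hzero j j.2
  set ζ : Fin (2*n+2) → ℝ := fun j => (hζex j).choose with hζdef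
  have hζ : ∀ j : Fin (2*n+2), ζ j ∈ Ioo (p (j:ℕ)) (p ((j:ℕ)+1)) ∧ G (ζ j) = 0 :=
    fun j => (hζex j).choose_spec
  clear_value ζ
  have hζmono : ∀ i k : Fin (2*n+2), (i:ℕ) < (k:ℕ) → ζ i < ζ k := by
    intro i k hik
    have h1 : ζ i < p ((i:ℕ)+1) := (hζ i).1.2
    have h2 : p (k:ℕ) < ζ k := (hζ k).1.1
    have h3 : p ((i:ℕ)+1) ≤ p (k:ℕ) := by
      rcases eq_or_lt_of_le (show (i:ℕ)+1 ≤ (k:ℕ) from hik) with heq | hlt'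
      · rw [heq]
      · exact (pmono _ _ hlt' (by omega)).le
    linarith
  have hperiod : p (2*n+2) = p 0 + 2*Real.pi := by
    rw [hp0, hpj (2*n+2) (by omega)]
    have : ((2*n+2:ℕ):ℝ) - 2 = 2*(n:ℝ) := by push_cast; ring
    rw [this]
    field_simp
  have hζmem : ∀ j : Fin (2*n+2), ζ j ∈ Ioo (p 0) (p 0 + 2*Real.pi) := by
    intro j
    constructor
    · have h2 : p (j:ℕ) < ζ j := (hζ j).1.1
      rcases Nat.eq_zero_or_pos (j:ℕ) with h | h
      · rw [h] at h2; exact h2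
      · exact (pmono 0 (j:ℕ) h (by omega)).trans h2
    · have h1 : ζ j < p ((j:ℕ)+1) := (hζ j).1.2
      have h3 : p ((j:ℕ)+1) ≤ p (2*n+2) := by
        rcases eq_or_lt_of_le (show (j:ℕ)+1 ≤ 2*n+2 by omega) with heq | hlt'
        · rw [heq]
        · exact (pmono _ _ hlt' (by omega)).le
      rw [hperiod] at h3
      linarith
  -- the complex polynomial
  set w : ℂ := Complex.exp ((↑(s - n*θ₀)) * I) with hw
  set F : Polynomial ℂ :=
    C ((L*M/2 : ℝ) : ℂ) * (C w * X^(2*n) + C ((starRingEnd ℂ) w)) - Bpoly P n m r with hF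
  have hFeval : ∀ θ : ℝ, F.eval (Complex.exp ((θ:ℂ) * I)) =
      Complex.exp ((θ:ℂ) * I) ^ n * ((G θ : ℝ) : ℂ) := by
    intro θ
    rw [hF]
    simp only [eval_sub, eval_mul, eval_add, eval_C, eval_pow, eval_X]
    rw [Bpoly_eval hP m r θ]
    rw [hw]
    rw [show Complex.exp ((↑(s - ↑n*θ₀)) * I) * Complex.exp ((θ:ℂ)*I)^(2*n) +
        (starRingEnd ℂ) (Complex.exp ((↑(s - ↑n*θ₀))*I)) =
        Complex.exp ((θ:ℂ)*I)^n * (2 * (Real.cos (↑n*(θ - θ₀) + s) : ℂ)) from trig_eval s θ₀ θ n]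
    rw [hGeq θ, hfθ θ]
    push_cast
    ring
  clear_value F
  have hdegF : F.natDegree ≤ 2*n := by
    rw [hF]
    refine (natDegree_sub_le _ _).trans (max_le ?_ ((Bpoly_natDegree_le P n m r)))
    refine (natDegree_C_mul_le _ _).trans ((natDegree_add_le _ _).trans (max_le ?_ ?_))
    · exact (natDegree_C_mul_le _ _).trans (natDegree_X_pow _).le
    · simp
  have hFne : F ≠ 0 := by
    intro h
    have h0' : 0 < G (p 0) := by
      have := hsign 0 (by omega)
      simpa using this
    have he := hFeval (p 0)
    rw [h] at he
    simp only [eval_zero] at he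
    have hzne : Complex.exp ((↑(p 0):ℂ) * I) ^ n ≠ 0 := pow_ne_zero _ (Complex.exp_ne_zero _)
    have : ((G (p 0) : ℝ) : ℂ) = 0 := by
      rcases mul_eq_zero.mp he.symm with h' | h'
      · exact absurd h' hzne
      · exact h'
    rw [Complex.ofReal_eq_zero] at this
    linarith
  -- injectivity of the circle points
  have hinj : Function.Injective (fun j : Fin (2*n+2) => Complex.exp ((↑(ζ j):ℂ) * I)) := by
    intro i k hik
    simp only at hik
    obtain ⟨t, ht⟩ := Complex.exp_eq_exp_iff_exists_int.mp hik
    have him : (ζ i : ℝ) = (ζ k : ℝ) + (t:ℝ) * (2*Real.pi) := by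
      have := congrArg Complex.im ht
      simpa [Complex.mul_im, Complex.ofReal_re, Complex.ofReal_im] using this
    have hbi := hζmem i
    have hbk := hζmem k
    have htt : |(t:ℝ)| * (2*Real.pi) < 2*Real.pi := by
      have h1 : |ζ i - ζ k| < 2*Real.pi := by
        rw [abs_lt]
        constructor <;> [linarith [hbi.1, hbk.2]; linarith [hbi.2, hbk.1]]
      have h2 : ζ i - ζ k = (t:ℝ) * (2*Real.pi) := by linarith
      rw [h2] at h1
      rwa [abs_mul, abs_of_pos (by positivity : (0:ℝ) < 2*Real.pi)] at h1
    have ht0 : t = 0 := by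
      by_contra h'
      have : (1:ℝ) ≤ |(t:ℝ)| := by
        rw [← Int.cast_abs]
        exact_mod_cast Int.one_le_abs h'
      nlinarith [Real.pi_pos]
    rw [ht0] at him
    simp at him
    -- ζ i = ζ k implies i = k
    by_contra hne
    rcases lt_trichotomy (i:ℕ) (k:ℕ) with h' | h' | h'
    · exact absurd him (ne_of_lt (hζmono i k h'))
    · exact hne (Fin.ext h')
    · exact absurd him.symm (ne_of_lt (hζmono k i h'))
  -- count roots
  have hroot : ∀ j : Fin (2*n+2), Complex.exp ((↑(ζ j):ℂ) * I) ∈ F.roots := by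
    intro j
    rw [Polynomial.mem_roots hFne]
    have := hFeval (ζ j)
    rw [(hζ j).2] at this
    simp only [Complex.ofReal_zero, mul_zero] at this
    exact this
  have hsub : Finset.image (fun j : Fin (2*n+2) => Complex.exp ((↑(ζ j):ℂ) * I)) Finset.univ
      ⊆ F.roots.toFinset := by
    intro z hz
    obtain ⟨j, _, rfl⟩ := Finset.mem_image.mp hz
    exact Multiset.mem_toFinset.mpr (hroot j)
  have hcard : 2*n+2 ≤ Multiset.card F.roots := by
    calc 2*n+2
        = (Finset.image (fun j : Fin (2*n+2) => Complex.exp ((↑(ζ j):ℂ) * I)) Finset.univ).card := by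
          rw [Finset.card_image_of_injective _ hinj, Finset.card_univ, Fintype.card_fin]
      _ ≤ F.roots.toFinset.card := Finset.card_le_card hsub
      _ ≤ Multiset.card F.roots := Multiset.toFinset_card_le _
  have := (Polynomial.card_roots' F).trans hdegF
  omega

lemma core_abs (hn : 1 ≤ n) (hP : P.natDegree ≤ n) (hM : 0 < M)
    (hf : ∀ θ : ℝ, |P.eval (m + r * Real.cos θ)| ≤ M)
    (h0 : |P.eval (m + r * Real.cos θ₀)| = M)
    (h1 : |θ₁ - θ₀| ≤ Real.pi / (3 * n)) :
    M / 2 ≤ |P.eval (m + r * Real.cos θ₁)| := by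
  obtain ⟨hd1, hd2⟩ := abs_le.mp h1
  have habs : ∀ (Q : Polynomial ℝ), Q = P ∨ Q = -P →
      ∀ α β : ℝ, Q.eval (m + r * Real.cos α) = M → α ≤ β → β ≤ α + Real.pi / (3*n) →
      M / 2 ≤ |P.eval (m + r * Real.cos β)| := by
    intro Q hQ α β hα hαβ hβ
    have hQdeg : Q.natDegree ≤ n := by
      rcases hQ with rfl | rfl
      · exact hP
      · rwa [natDegree_neg]
    have hQf : ∀ θ : ℝ, |Q.eval (m + r * Real.cos θ)| ≤ M := by
      intro θ
      rcases hQ with rfl | rfl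
      · exact hf θ
      · rw [eval_neg, abs_neg]; exact hf θ
    have := core hn hQdeg hM hQf hα hαβ hβ
    rcases hQ with rfl | rfl
    · exact this.trans (le_abs_self _)
    · rw [eval_neg] at this
      exact this.trans (neg_le_abs _)
  rcases abs_eq hM.le |>.mp h0 with hpos | hneg
  · rcases le_total θ₀ θ₁ with hc | hc
    · exact habs P (Or.inl rfl) θ₀ θ₁ hpos hc (by linarith)
    · have h0' : P.eval (m + r * Real.cos (-θ₀)) = M := by rwa [Real.cos_neg]
      have := habs P (Or.inl rfl) (-θ₀) (-θ₁) h0' (by linarith) (by linarith)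
      rwa [Real.cos_neg] at this
  · rcases le_total θ₀ θ₁ with hc | hc
    · have h0' : (-P).eval (m + r * Real.cos θ₀) = M := by rw [eval_neg, hneg, neg_neg]
      exact habs (-P) (Or.inr rfl) θ₀ θ₁ h0' hc (by linarith)
    · have h0' : (-P).eval (m + r * Real.cos (-θ₀)) = M := by
        rw [Real.cos_neg, eval_neg, hneg, neg_neg]
      have := habs (-P) (Or.inr rfl) (-θ₀) (-θ₁) h0' (by linarith) (by linarith)
      rwa [Real.cos_neg] at this

end Core

-- geometry: for 0 ≤ φ, 0 ≤ u, φ + u ≤ π : 1 - cos u ≤ cos φ - cos (φ+u)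
lemma cos_drop {φ u : ℝ} (hφ : 0 ≤ φ) (hu : 0 ≤ u) (h : φ + u ≤ Real.pi) :
    1 - Real.cos u ≤ Real.cos φ - Real.cos (φ + u) := by
  have hπ : 0 < Real.pi := Real.pi_pos
  have e1 : Real.cos φ - Real.cos (φ + u) = 2 * Real.sin (φ + u/2) * Real.sin (u/2) := by
    rw [Real.cos_sub_cos]
    rw [show (φ + (φ + u))/2 = φ + u/2 by ring, show (φ - (φ + u))/2 = -(u/2) by ring,
      Real.sin_neg]
    ring
  have e2 : 1 - Real.cos u = 2 * Real.sin (u/2) * Real.sin (u/2) := by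
    have hA := Real.cos_sq (u/2)
    rw [show 2*(u/2) = u by ring] at hA
    have hB := Real.sin_sq_add_cos_sq (u/2)
    nlinarith
  rw [e1, e2]
  have h3 : Real.sin (u/2) ≤ Real.sin (φ + u/2) := by
    have hs : Real.sin (φ + u/2) - Real.sin (u/2) =
        2 * Real.sin (φ/2) * Real.cos ((φ + u)/2) := by
      rw [Real.sin_sub_sin]
      rw [show (φ + u/2 - u/2)/2 = φ/2 by ring, show (φ + u/2 + u/2)/2 = (φ + u)/2 by ring]
    have c1 : 0 ≤ Real.sin (φ/2) :=
      Real.sin_nonneg_of_nonneg_of_le_pi (by linarith) (by linarith)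
    have c2 : 0 ≤ Real.cos ((φ + u)/2) := by
      apply Real.cos_nonneg_of_mem_Icc
      constructor <;> [linarith; linarith]
    nlinarith
  have h4 : 0 ≤ Real.sin (u/2) :=
    Real.sin_nonneg_of_nonneg_of_le_pi (by linarith) (by linarith)
  nlinarith

-- numeric: 1/(2 n²) ≤ 1 - cos (π / (3 n)) for n ≥ 1
set_option maxHeartbeats 1000000 in
lemma key_numeric (n : ℕ) (hn : 1 ≤ n) :
    1 / (2 * (n:ℝ)^2) ≤ 1 - Real.cos (Real.pi / (3 * n)) := by
  have hn0 : (0:ℝ) < n := by exact_mod_cast hn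
  rcases eq_or_lt_of_le hn with h1 | h2
  · -- n = 1
    have hone : (n:ℝ) = 1 := by exact_mod_cast h1.symm
    rw [hone, show Real.pi/(3*(1:ℝ)) = Real.pi/3 by norm_num, Real.cos_pi_div_three]
    norm_num
  · -- n ≥ 2
    have hn2 : (2:ℝ) ≤ n := by exact_mod_cast h2
    have hπ3 : (3.141592:ℝ) < Real.pi := Real.pi_gt_d6
    have hπ4 : Real.pi < 3.15 := Real.pi_lt_d2
    have hπsq : Real.pi^2 < 9.9225 := by nlinarith
    have hπcube : Real.pi^3 < 31.26 := by nlinarith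
    obtain ⟨u, hu⟩ : ∃ u : ℝ, u = 1/(n:ℝ) := ⟨_, rfl⟩
    obtain ⟨t, ht⟩ : ∃ t : ℝ, t = Real.pi / (6*(n:ℝ)) := ⟨_, rfl⟩
    have hu0 : 0 < u := by rw [hu]; positivity
    have hu2 : u ≤ 1/2 := by
      rw [hu, div_le_div_iff₀ hn0 (by norm_num)]; linarith
    have htu : t = (Real.pi/6) * u := by rw [ht, hu]; field_simp
    have ht0 : 0 < t := by rw [ht]; positivity
    have ht1 : t ≤ 1 := by rw [htu]; nlinarith
    have hsin : t - t^3/4 < Real.sin t := by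
      have := Real.sin_gt_sub_cube ht0; nlinarith [pow_pos ht0 3]
    have e1 : Real.pi / (3 * n) = 2 * t := by
      rw [ht]; field_simp; ring
    have e2 : 1 - Real.cos (2*t) = 2 * Real.sin t ^ 2 := by
      have hA := Real.cos_sq t
      have hB := Real.sin_sq_add_cos_sq t
      linarith
    have e0 : 1 / (2 * (n:ℝ)^2) = u^2/2 := by
      rw [hu]; field_simp
    rw [e1, e2, e0]
    have hs2 : u/2 ≤ Real.sin t := by
      have hcube : t^3 = (Real.pi/6)^3 * u^3 := by rw [htu]; ring
      have huu : u^2 ≤ 1/4 := by nlinarith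
      have hkey : u/2 ≤ (Real.pi/6) * u - (Real.pi/6)^3 * u^3 / 4 := by
        have h5 : (Real.pi/6)^3 * u^2 ≤ 31.26/216 * (1/4) := by
          have hc : (Real.pi/6)^3 ≤ 31.26/216 := by nlinarith
          have hp : (0:ℝ) < (Real.pi/6)^3 := by positivity
          nlinarith
        nlinarith [mul_pos hu0 hu0, mul_le_mul_of_nonneg_left h5 hu0.le]
      calc u/2 ≤ (Real.pi/6) * u - (Real.pi/6)^3 * u^3 / 4 := hkey
        _ = t - t^3/4 := by rw [htu]; ring
        _ ≤ Real.sin t := hsin.le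
    nlinarith [hs2, hu0]

lemma arccos_anti {x y : ℝ} (h : x ≤ y) : Real.arccos y ≤ Real.arccos x := by
  rw [Real.arccos_eq_pi_div_two_sub_arcsin, Real.arccos_eq_pi_div_two_sub_arcsin]
  have := Real.monotone_arcsin h
  linarith

set_option maxHeartbeats 1000000 in
/-- Lemma 2.9: if `P` is a real polynomial of degree at most `n ≥ 1` and
`M = max_{[a,b]} |P|`, then there is a closed subinterval of `[a,b]` of length at least
`(b-a)/(4n²)` on which `|P| ≥ M/2`. -/
theorem polynomial_large_on_subinterval (n : ℕ) (hn : 1 ≤ n) (P : Polynomial ℝ)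
    (hP : P.natDegree ≤ n) (a b : ℝ) (hab : a < b) (M : ℝ)
    (hM : IsGreatest ((fun x => |P.eval x|) '' Icc a b) M) :
    ∃ c d : ℝ, a ≤ c ∧ c ≤ d ∧ d ≤ b ∧ (b - a) / (4 * (n : ℝ) ^ 2) ≤ d - c ∧
      ∀ x ∈ Icc c d, M / 2 ≤ |P.eval x| := by
  obtain ⟨⟨x₀, hx₀mem, hx₀⟩, hub⟩ := hM
  simp only at hx₀
  have hn0 : (0:ℝ) < n := by exact_mod_cast hn
  have hM0 : 0 ≤ M := hx₀ ▸ abs_nonneg _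
  rcases eq_or_lt_of_le hM0 with hM0' | hMpos
  · -- M = 0 : trivial
    refine ⟨a, b, le_refl a, hab.le, le_refl b, ?_, ?_⟩
    · have hn1 : (1:ℝ) ≤ n := by exact_mod_cast hn
      have h4 : (1:ℝ) ≤ 4*(n:ℝ)^2 := by nlinarith
      exact div_le_self (by linarith) h4
    · intro x hx
      rw [← hM0']
      simpa using abs_nonneg (P.eval x)
  -- M > 0
  set m : ℝ := (a+b)/2 with hm
  set r : ℝ := (b-a)/2 with hr
  have hr0 : 0 < r := by rw [hr]; linarith
  have hmem : ∀ θ : ℝ, m + r * Real.cos θ ∈ Icc a b := by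
    intro θ
    have h1 := Real.neg_one_le_cos θ
    have h2 := Real.cos_le_one θ
    constructor
    · rw [hm, hr]; nlinarith
    · rw [hm, hr]; nlinarith
  have hf : ∀ θ : ℝ, |P.eval (m + r * Real.cos θ)| ≤ M := fun θ => hub ⟨_, hmem θ, rfl⟩
  have hx₀1 : -1 ≤ (x₀ - m)/r := by
    rw [le_div_iff₀ hr0, hm, hr]
    have := hx₀mem.1
    linarith
  have hx₀2 : (x₀ - m)/r ≤ 1 := by
    rw [div_le_one hr0, hm, hr]
    have := hx₀mem.2
    linarith
  set θ₀ : ℝ := Real.arccos ((x₀ - m)/r) with hθ₀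
  have hθ₀mem : 0 ≤ θ₀ ∧ θ₀ ≤ Real.pi := ⟨Real.arccos_nonneg _, Real.arccos_le_pi _⟩
  have hcosθ₀ : m + r * Real.cos θ₀ = x₀ := by
    rw [hθ₀, Real.cos_arccos hx₀1 hx₀2]
    field_simp
    ring
  have h0 : |P.eval (m + r * Real.cos θ₀)| = M := by rw [hcosθ₀]; exact hx₀
  set u : ℝ := Real.pi / (3 * n) with hudef
  have hπ : (3:ℝ) < Real.pi := Real.pi_gt_three
  have hu0 : 0 < u := by rw [hudef]; positivity
  have hupi : u ≤ Real.pi / 3 := by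
    rw [hudef, div_le_div_iff₀ (by positivity) (by norm_num)]
    have hn1 : (1:ℝ) ≤ n := by exact_mod_cast hn
    nlinarith [Real.pi_pos, mul_le_mul_of_nonneg_left hn1 Real.pi_pos.le]
  -- the length bound common computation
  have hlen : (b - a) / (4 * (n:ℝ)^2) ≤ r * (1 - Real.cos u) := by
    have hkn := key_numeric n hn
    rw [← hudef] at hkn
    have he : (b - a) / (4 * (n:ℝ)^2) = r * (1/(2*(n:ℝ)^2)) := by
      rw [hr]; ring
    rw [he]
    exact mul_le_mul_of_nonneg_left hkn hr0.le
  rcases le_total θ₀ (Real.pi/2) with hhalf | hhalf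
  · -- θ₀ ≤ π/2 : interval [θ₀, θ₀ + u]
    refine ⟨m + r * Real.cos (θ₀ + u), m + r * Real.cos θ₀, ?_, ?_, ?_, ?_, ?_⟩
    · exact (hmem (θ₀ + u)).1
    · have : Real.cos (θ₀ + u) ≤ Real.cos θ₀ :=
        Real.cos_le_cos_of_nonneg_of_le_pi hθ₀mem.1 (by linarith) (by linarith)
      nlinarith
    · exact (hmem θ₀).2
    · have hdrop : 1 - Real.cos u ≤ Real.cos θ₀ - Real.cos (θ₀ + u) :=
        cos_drop hθ₀mem.1 hu0.le (by linarith)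
      have he2 : m + r * Real.cos θ₀ - (m + r * Real.cos (θ₀ + u))
          = r * (Real.cos θ₀ - Real.cos (θ₀ + u)) := by ring
      rw [he2]
      calc (b - a) / (4 * (n:ℝ)^2) ≤ r * (1 - Real.cos u) := hlen
        _ ≤ r * (Real.cos θ₀ - Real.cos (θ₀ + u)) := by nlinarith
    · intro x hx
      have hxx₀ : x ≤ x₀ := by
        have := hx.2; rwa [hcosθ₀] at this
      have hxc : m + r * Real.cos (θ₀ + u) ≤ x := hx.1
      have hxa : a ≤ x := le_trans (hmem (θ₀ + u)).1 hxc
      have hxb : x ≤ b := le_trans hx.2 (hmem θ₀).2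
      have hx1 : -1 ≤ (x - m)/r := by
        rw [le_div_iff₀ hr0, hm, hr]; linarith
      have hx2 : (x - m)/r ≤ 1 := by
        rw [div_le_one hr0, hm, hr]; linarith
      set θ₁ : ℝ := Real.arccos ((x - m)/r) with hθ₁
      have hcosθ₁ : m + r * Real.cos θ₁ = x := by
        rw [hθ₁, Real.cos_arccos hx1 hx2]; field_simp; ring
      have hθ₁ge : θ₀ ≤ θ₁ := by
        rw [hθ₀, hθ₁]
        exact arccos_anti ((div_le_div_iff_of_pos_right hr0).mpr (by linarith))
      have hθ₁le : θ₁ ≤ θ₀ + u := by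
        have hcx : Real.cos (θ₀ + u) ≤ (x - m)/r := by
          rw [le_div_iff₀ hr0]; linarith
        have := arccos_anti hcx
        rwa [Real.arccos_cos (by linarith) (by linarith)] at this
      have habs1 : |θ₁ - θ₀| ≤ Real.pi / (3*(n:ℝ)) := by
        rw [abs_le]
        constructor
        · linarith
        · rw [← hudef]; linarith
      have := core_abs hn hP hMpos hf h0 habs1
      rwa [hcosθ₁] at this
  · -- θ₀ ≥ π/2 : interval [θ₀ - u, θ₀]
    refine ⟨m + r * Real.cos θ₀, m + r * Real.cos (θ₀ - u), ?_, ?_, ?_, ?_, ?_⟩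
    · exact (hmem θ₀).1
    · have : Real.cos θ₀ ≤ Real.cos (θ₀ - u) :=
        Real.cos_le_cos_of_nonneg_of_le_pi (by linarith) hθ₀mem.2 (by linarith)
      nlinarith
    · exact (hmem (θ₀ - u)).2
    · have hdrop : 1 - Real.cos u ≤ Real.cos (θ₀ - u) - Real.cos θ₀ := by
        have he3 : Real.cos (θ₀ - u) - Real.cos θ₀ =
            Real.cos (Real.pi - θ₀) - Real.cos ((Real.pi - θ₀) + u) := by
          rw [show (Real.pi - θ₀) + u = Real.pi - (θ₀ - u) by ring,
            Real.cos_pi_sub, Real.cos_pi_sub]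
          ring
        rw [he3]
        exact cos_drop (by linarith [hθ₀mem.2]) hu0.le (by linarith)
      have he2 : m + r * Real.cos (θ₀ - u) - (m + r * Real.cos θ₀)
          = r * (Real.cos (θ₀ - u) - Real.cos θ₀) := by ring
      rw [he2]
      calc (b - a) / (4 * (n:ℝ)^2) ≤ r * (1 - Real.cos u) := hlen
        _ ≤ r * (Real.cos (θ₀ - u) - Real.cos θ₀) := by nlinarith
    · intro x hx
      have hx₀x : x₀ ≤ x := by
        have := hx.1; rwa [hcosθ₀] at this
      have hxd : x ≤ m + r * Real.cos (θ₀ - u) := hx.2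
      have hxa : a ≤ x := le_trans (hmem θ₀).1 hx.1
      have hxb : x ≤ b := le_trans hxd (hmem (θ₀ - u)).2
      have hx1 : -1 ≤ (x - m)/r := by
        rw [le_div_iff₀ hr0, hm, hr]; linarith
      have hx2 : (x - m)/r ≤ 1 := by
        rw [div_le_one hr0, hm, hr]; linarith
      set θ₁ : ℝ := Real.arccos ((x - m)/r) with hθ₁
      have hcosθ₁ : m + r * Real.cos θ₁ = x := by
        rw [hθ₁, Real.cos_arccos hx1 hx2]; field_simp; ring
      have hθ₁le : θ₁ ≤ θ₀ := by
        rw [hθ₀, hθ₁]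
        exact arccos_anti ((div_le_div_iff_of_pos_right hr0).mpr (by linarith))
      have hθ₁ge : θ₀ - u ≤ θ₁ := by
        have hcx : (x - m)/r ≤ Real.cos (θ₀ - u) := by
          rw [div_le_iff₀ hr0]; linarith
        have := arccos_anti hcx
        rwa [Real.arccos_cos (by linarith) (by linarith)] at this
      have habs1 : |θ₁ - θ₀| ≤ Real.pi / (3*(n:ℝ)) := by
        rw [abs_le]
        constructor
        · rw [← hudef]; linarith
        · linarith
      have := core_abs hn hP hMpos hf h0 habs1
      rwa [hcosθ₁] at this
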